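/- For the ε-dependent excited kernel e^ε(y,t) = (1/(2ε))(errfn((-y-εt)/√(4t)) - errfn((-y+εt)/√(4t))) with 0 < ε ≤ 1, there exists C > 0 independent of ε such that |e^ε_t(y,t)| ≤ C t^{-1/2}(e^{-(-y-εt)²/(Ct)} + e^{-(-y+εt)²/(Ct)}) for all y ∈ ℝ and t > 0. -/

import Mathlib

open Real Set MeasureTheory intervalIntegral

noncomputable def errfn (z : ℝ) : ℝ :=
  (Real.sqrt Real.pi)⁻¹ * ∫ ξ in Set.Iic z, Real.exp (-ξ ^ 2)

noncomputable def eKerEps (ε y t : ℝ) : ℝ :=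
  (1 / (2 * ε)) * (errfn ((-y - ε * t) / Real.sqrt (4 * t))
    - errfn ((-y + ε * t) / Real.sqrt (4 * t)))

lemma abs_le_exp_half_sq (x : ℝ) : |x| ≤ Real.exp (x^2/2) := by
  have h := Real.add_one_le_exp (x^2/2)
  nlinarith [sq_abs x, abs_nonneg x]

lemma sq_le_two_exp (x : ℝ) : x^2 ≤ 2 * Real.exp (x^2/2) := by
  have h := Real.add_one_le_exp (x^2/2)
  nlinarith [Real.exp_pos (x^2/2)]

lemma abs_mul_exp_neg_sq (x : ℝ) : |x| * Real.exp (-x^2) ≤ Real.exp (-x^2/2) := by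
  calc |x| * Real.exp (-x^2) ≤ Real.exp (x^2/2) * Real.exp (-x^2) :=
        mul_le_mul_of_nonneg_right (abs_le_exp_half_sq x) (Real.exp_pos _).le
    _ = Real.exp (-x^2/2) := by rw [← Real.exp_add]; ring_nf

lemma sq_mul_exp_neg_sq (x : ℝ) : x^2 * Real.exp (-x^2) ≤ 2 * Real.exp (-x^2/2) := by
  calc x^2 * Real.exp (-x^2) ≤ (2 * Real.exp (x^2/2)) * Real.exp (-x^2) :=
        mul_le_mul_of_nonneg_right (sq_le_two_exp x) (Real.exp_pos _).le
    _ = 2 * Real.exp (-x^2/2) := by rw [mul_assoc, ← Real.exp_add]; ring_nf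

set_option maxHeartbeats 1000000 in
lemma key_cancel (u v : ℝ) (huv : u ≤ v) :
    |u * Real.exp (-v^2) - v * Real.exp (-u^2)| ≤
      11 * (v - u) * (Real.exp (-u^2/4) + Real.exp (-v^2/4)) := by
  have hEu := Real.exp_pos (-u^2)
  have hEv := Real.exp_pos (-v^2)
  have hAu := Real.exp_pos (-u^2/4)
  have hAv := Real.exp_pos (-v^2/4)
  have hu4 : Real.exp (-u^2) ≤ Real.exp (-u^2/4) := Real.exp_le_exp.2 (by nlinarith [sq_nonneg u])
  have hv4 : Real.exp (-v^2) ≤ Real.exp (-v^2/4) := Real.exp_le_exp.2 (by nlinarith [sq_nonneg v])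
  have hu2 : Real.exp (-u^2/2) ≤ Real.exp (-u^2/4) := Real.exp_le_exp.2 (by nlinarith [sq_nonneg u])
  have hv2 : Real.exp (-v^2/2) ≤ Real.exp (-v^2/4) := Real.exp_le_exp.2 (by nlinarith [sq_nonneg v])
  rcases le_or_gt 1 (v - u) with hbig | hsmall
  · -- crude bound
    have tri : |u * Real.exp (-v^2) - v * Real.exp (-u^2)|
        ≤ |u| * Real.exp (-v^2) + |v| * Real.exp (-u^2) := by
      rw [sub_eq_add_neg]
      refine (abs_add_le _ _).trans ?_
      rw [abs_neg, abs_mul, abs_mul, abs_of_pos hEv, abs_of_pos hEu]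
    have h1 : |u| ≤ |v| + (v - u) := by
      have := abs_sub_abs_le_abs_sub u v
      have h2 : |u - v| = v - u := by rw [abs_sub_comm, abs_of_nonneg (by linarith)]
      linarith
    have h2 : |v| ≤ |u| + (v - u) := by
      have := abs_sub_abs_le_abs_sub v u
      have h2 : |v - u| = v - u := abs_of_nonneg (by linarith)
      linarith
    have hbu : |u| * Real.exp (-v^2) ≤ 2 * (v - u) * Real.exp (-v^2/4) := by
      have := (abs_mul_exp_neg_sq v).trans hv2
      nlinarith [abs_nonneg v]
    have hbv : |v| * Real.exp (-u^2) ≤ 2 * (v - u) * Real.exp (-u^2/4) := by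
      have := (abs_mul_exp_neg_sq u).trans hu2
      nlinarith [abs_nonneg u]
    nlinarith
  · -- mean value theorem bound
    have hder : ∀ x ∈ Icc u v,
        HasDerivWithinAt (fun x : ℝ => u * Real.exp (-x^2) - x * Real.exp (-u^2))
          (u * (Real.exp (-x^2) * (-(2*x))) - Real.exp (-u^2)) (Icc u v) x := by
      intro x hx
      have h1 : HasDerivAt (fun x : ℝ => -x^2) (-(2*x)) x := by
        simpa using (hasDerivAt_pow 2 x).fun_neg
      have h2 : HasDerivAt (fun x : ℝ => Real.exp (-x^2)) (Real.exp (-x^2) * (-(2*x))) x := h1.exp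
      have h3 : HasDerivAt (fun x : ℝ => x * Real.exp (-u^2)) (Real.exp (-u^2)) x := by
        simpa using (hasDerivAt_id x).mul_const (Real.exp (-u^2))
      exact ((h2.const_mul u).sub h3).hasDerivWithinAt
    have hbound : ∀ x ∈ Ico u v,
        ‖u * (Real.exp (-x^2) * (-(2*x))) - Real.exp (-u^2)‖ ≤ 11 * Real.exp (-u^2/4) := by
      intro x hx
      have hxu : u ≤ x := hx.1
      have hxv : x - u ≤ 1 := by have := hx.2; linarith
      have hux : |u| ≤ |x| + 1 := by
        have h0 : |u - x| = x - u := by rw [abs_sub_comm, abs_of_nonneg (by linarith)]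
        have := abs_sub_abs_le_abs_sub u x
        linarith
      have hEx := Real.exp_pos (-x^2)
      have k1 : x^2 * Real.exp (-x^2) ≤ 2 * Real.exp (-x^2/2) := sq_mul_exp_neg_sq x
      have k2 : |x| * Real.exp (-x^2) ≤ Real.exp (-x^2/2) := abs_mul_exp_neg_sq x
      have habsx : |x| * |x| = x^2 := by rw [← sq_abs]; ring
      have k3 : Real.exp (-x^2/2) ≤ Real.exp ((1:ℝ)/2) * Real.exp (-u^2/4) := by
        rw [← Real.exp_add]
        apply Real.exp_le_exp.2
        nlinarith [sq_abs x, sq_abs u, abs_nonneg x, abs_nonneg u,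
          mul_self_le_mul_self (abs_nonneg u) hux, sq_nonneg (|x| - 1)]
      have k4 : Real.exp ((1:ℝ)/2) ≤ 5/3 := by
        have h1 := Real.exp_one_lt_d9
        have h2 : Real.exp ((1:ℝ)/2) * Real.exp ((1:ℝ)/2) = Real.exp 1 := by
          rw [← Real.exp_add]; norm_num
        nlinarith [Real.exp_pos ((1:ℝ)/2)]
      have tri : |u * (Real.exp (-x^2) * (-(2*x))) - Real.exp (-u^2)|
          ≤ |u| * (Real.exp (-x^2) * (2*|x|)) + Real.exp (-u^2) := by
        rw [sub_eq_add_neg]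
        refine (abs_add_le _ _).trans ?_
        rw [abs_neg, abs_of_pos hEu, abs_mul, abs_mul, abs_of_pos hEx, abs_neg, abs_mul,
          abs_two]
      have expand : |u| * (Real.exp (-x^2) * (2*|x|))
          ≤ 2 * (x^2 * Real.exp (-x^2)) + 2 * (|x| * Real.exp (-x^2)) := by
        calc |u| * (Real.exp (-x^2) * (2*|x|))
            ≤ (|x| + 1) * (Real.exp (-x^2) * (2*|x|)) :=
              mul_le_mul_of_nonneg_right hux (by positivity)
          _ = 2 * ((|x| * |x|) * Real.exp (-x^2)) + 2 * (|x| * Real.exp (-x^2)) := by ring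
          _ = 2 * (x^2 * Real.exp (-x^2)) + 2 * (|x| * Real.exp (-x^2)) := by rw [habsx]
      rw [Real.norm_eq_abs]
      calc |u * (Real.exp (-x^2) * (-(2*x))) - Real.exp (-u^2)|
          ≤ |u| * (Real.exp (-x^2) * (2*|x|)) + Real.exp (-u^2) := tri
        _ ≤ (2 * (2 * Real.exp (-x^2/2)) + 2 * Real.exp (-x^2/2)) + Real.exp (-u^2/4) := by
            nlinarith
        _ = 6 * Real.exp (-x^2/2) + Real.exp (-u^2/4) := by ring
        _ ≤ 6 * (Real.exp ((1:ℝ)/2) * Real.exp (-u^2/4)) + Real.exp (-u^2/4) := by nlinarith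
        _ ≤ 6 * ((5/3) * Real.exp (-u^2/4)) + Real.exp (-u^2/4) := by nlinarith
        _ = 11 * Real.exp (-u^2/4) := by ring
    have hmvt := norm_image_sub_le_of_norm_deriv_le_segment' hder hbound v
      (right_mem_Icc.2 huv)
    simp only [Real.norm_eq_abs] at hmvt
    have hGu : u * Real.exp (-u^2) - u * Real.exp (-u^2) = 0 := by ring
    rw [hGu, sub_zero] at hmvt
    nlinarith [hmvt]

lemma errfn_hasDerivAt (z : ℝ) :
    HasDerivAt errfn ((Real.sqrt Real.pi)⁻¹ * Real.exp (-z^2)) z := by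
  have hint : Integrable (fun ξ : ℝ => Real.exp (-ξ^2)) := by
    simpa using integrable_exp_neg_mul_sq (one_pos)
  have hcont : Continuous (fun ξ : ℝ => Real.exp (-ξ^2)) := by continuity
  have hfun : errfn = fun w =>
      (Real.sqrt Real.pi)⁻¹ * ((∫ ξ in Set.Iic (0:ℝ), Real.exp (-ξ^2))
        + ∫ ξ in (0:ℝ)..w, Real.exp (-ξ^2)) := by
    funext w
    rw [errfn, ← integral_Iic_sub_Iic hint.integrableOn hint.integrableOn]
    ring
  have h1 : HasDerivAt (fun w => ∫ ξ in (0:ℝ)..w, Real.exp (-ξ^2))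
      (Real.exp (-z^2)) z :=
    integral_hasDerivAt_right hint.intervalIntegrable
      (hcont.stronglyMeasurableAtFilter _ _) hcont.continuousAt
  have h2 := (h1.const_add (∫ ξ in Set.Iic (0:ℝ), Real.exp (-ξ^2))).const_mul
      (Real.sqrt Real.pi)⁻¹
  rw [hfun]
  simpa using h2

lemma hasDerivAt_arg (b c t : ℝ) (ht : 0 < t) :
    HasDerivAt (fun s : ℝ => (b + c * s) / Real.sqrt (4 * s))
      ((c * Real.sqrt (4*t) - (b + c*t) * (2 / Real.sqrt (4*t))) / (4*t)) t := by
  have h4t : (0:ℝ) < 4 * t := by linarith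
  have hden_ne : Real.sqrt (4*t) ≠ 0 := by positivity
  have hs : HasDerivAt (fun s : ℝ => Real.sqrt (4*s)) (2 / Real.sqrt (4*t)) t := by
    have h := (Real.hasDerivAt_sqrt (ne_of_gt h4t)).comp t
      ((hasDerivAt_id t).const_mul 4)
    rw [show 2 / Real.sqrt (4*t) = 1 / (2 * Real.sqrt (4*t)) * (4*1) by ring]
    exact h
  have hnum : HasDerivAt (fun s : ℝ => b + c * s) c t := by
    simpa using ((hasDerivAt_id t).const_mul c).const_add b
  have h := hnum.div hs hden_ne
  rw [Real.sq_sqrt h4t.le] at h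
  exact h

set_option maxHeartbeats 1000000 in
lemma main_deriv (ε y t : ℝ) (hε : ε ≠ 0) (ht : 0 < t) :
    deriv (fun s : ℝ => eKerEps ε y s) t =
      ( ((-y - ε*t)/Real.sqrt (4*t)) * Real.exp (-(((-y + ε*t)/Real.sqrt (4*t)))^2)
        - ((-y + ε*t)/Real.sqrt (4*t)) * Real.exp (-(((-y - ε*t)/Real.sqrt (4*t)))^2) )
        / (4 * ε * t * Real.sqrt Real.pi) := by
  have h4t : (0:ℝ) < 4 * t := by linarith
  have hst : Real.sqrt (4*t) ≠ 0 := by positivity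
  have hu : HasDerivAt (fun s : ℝ => (-y - ε * s) / Real.sqrt (4 * s))
      (((-ε) * Real.sqrt (4*t) - (-y + (-ε)*t) * (2 / Real.sqrt (4*t))) / (4*t)) t := by
    have h := hasDerivAt_arg (-y) (-ε) t ht
    have hfe : (fun s : ℝ => (-y + (-ε) * s) / Real.sqrt (4 * s))
        = fun s : ℝ => (-y - ε * s) / Real.sqrt (4 * s) := by
      funext s; ring_nf
    rw [hfe] at h
    exact h
  have hv : HasDerivAt (fun s : ℝ => (-y + ε * s) / Real.sqrt (4 * s))
      ((ε * Real.sqrt (4*t) - (-y + ε*t) * (2 / Real.sqrt (4*t))) / (4*t)) t :=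
    hasDerivAt_arg (-y) ε t ht
  have hcu := (errfn_hasDerivAt ((-y - ε * t) / Real.sqrt (4 * t))).comp t hu
  have hcv := (errfn_hasDerivAt ((-y + ε * t) / Real.sqrt (4 * t))).comp t hv
  have hD := ((hcu.sub hcv).const_mul (1 / (2 * ε)))
  simp only [Function.comp_def] at hD
  have hfun : (fun s : ℝ => eKerEps ε y s)
      = fun s : ℝ => (1 / (2 * ε)) *
          ((fun s : ℝ => errfn ((-y - ε * s) / Real.sqrt (4 * s))) s
            - (fun s : ℝ => errfn ((-y + ε * s) / Real.sqrt (4 * s))) s) := by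
    funext s; rfl
  have hD' : HasDerivAt (fun s : ℝ => (1 / (2 * ε)) *
          ((fun s : ℝ => errfn ((-y - ε * s) / Real.sqrt (4 * s))) s
            - (fun s : ℝ => errfn ((-y + ε * s) / Real.sqrt (4 * s))) s)) _ t := hD
  rw [hfun, hD'.deriv]
  have hπ : Real.sqrt Real.pi ≠ 0 := by positivity
  have hr : (0:ℝ) < Real.sqrt t := Real.sqrt_pos.2 ht
  have h4 : Real.sqrt (4*t) = 2 * Real.sqrt t := by
    rw [show (4:ℝ)*t = 2^2*t by norm_num, Real.sqrt_mul (by positivity) t,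
      Real.sqrt_sq (by norm_num : (0:ℝ) ≤ 2)]
  set r := Real.sqrt t with hrdef
  rw [h4, show t = r^2 from (Real.sq_sqrt ht.le).symm]
  field_simp
  ring

set_option maxHeartbeats 1000000 in
/-- Uniform (in `0 < ε ≤ 1`) Gaussian bound on the time derivative of the
`ε`-dependent excited kernel `e^ε(y,t)`. -/
theorem eKerEps_deriv_t_bound :
    ∃ C : ℝ, 0 < C ∧ ∀ ε : ℝ, 0 < ε → ε ≤ 1 → ∀ (y t : ℝ), 0 < t →
      |deriv (fun s : ℝ => eKerEps ε y s) t|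
        ≤ C * t ^ (-(1 / 2 : ℝ)) *
            (Real.exp (-(-y - ε * t) ^ 2 / (C * t))
              + Real.exp (-(-y + ε * t) ^ 2 / (C * t))) := by
  refine ⟨16, by norm_num, fun ε hε hε1 y t ht => ?_⟩
  have h4t : (0:ℝ) < 4 * t := by linarith
  have hrpos : (0:ℝ) < Real.sqrt t := Real.sqrt_pos.2 ht
  have hr2 : Real.sqrt t ^ 2 = t := Real.sq_sqrt ht.le
  have h4 : Real.sqrt (4*t) = 2 * Real.sqrt t := by
    rw [show (4:ℝ)*t = 2^2*t by norm_num, Real.sqrt_mul (by positivity) t,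
      Real.sqrt_sq (by norm_num : (0:ℝ) ≤ 2)]
  have hπ : (0:ℝ) < Real.sqrt Real.pi := Real.sqrt_pos.2 Real.pi_pos
  have hπ1 : (1:ℝ) ≤ Real.sqrt Real.pi := by
    rw [show (1:ℝ) = Real.sqrt 1 by simp]
    exact Real.sqrt_le_sqrt (by nlinarith [Real.pi_gt_three])
  rw [main_deriv ε y t hε.ne' ht]
  set u := (-y - ε*t)/Real.sqrt (4*t) with hu
  set v := (-y + ε*t)/Real.sqrt (4*t) with hv
  have huv : u ≤ v := by
    rw [hu, hv]
    apply div_le_div_of_nonneg_right ?_ (by positivity)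
    nlinarith
  have hvu : v - u = ε * Real.sqrt t := by
    rw [hu, hv, h4, div_sub_div_same]
    rw [show (-y + ε*t) - (-y - ε*t) = 2 * ε * t by ring]
    field_simp
    linear_combination hr2.symm
  rw [abs_div, abs_of_pos (by positivity : (0:ℝ) < 4 * ε * t * Real.sqrt Real.pi)]
  have hkey := key_cancel u v huv
  rw [hvu] at hkey
  have hEu : Real.exp (-u^2/4) = Real.exp (-(-y - ε * t) ^ 2 / (16 * t)) := by
    congr 1
    rw [hu, div_pow, Real.sq_sqrt h4t.le]
    ring
  have hEv : Real.exp (-v^2/4) = Real.exp (-(-y + ε * t) ^ 2 / (16 * t)) := by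
    congr 1
    rw [hv, div_pow, Real.sq_sqrt h4t.le]
    ring
  have hrpow : t ^ (-(1/2:ℝ)) = (Real.sqrt t)⁻¹ := by
    rw [Real.rpow_neg ht.le, Real.sqrt_eq_rpow]
  rw [hrpow, ← hEu, ← hEv]
  set r := Real.sqrt t with hrdef
  rw [show t = r^2 from hr2.symm]
  have hE1 := Real.exp_pos (-u^2/4)
  have hE2 := Real.exp_pos (-v^2/4)
  calc |u * Real.exp (-v ^ 2) - v * Real.exp (-u ^ 2)| / (4 * ε * r^2 * Real.sqrt Real.pi)
      ≤ 11 * (ε * r) * (Real.exp (-u^2/4) + Real.exp (-v^2/4))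
          / (4 * ε * r^2 * Real.sqrt Real.pi) := by
        apply div_le_div_of_nonneg_right hkey (by positivity)
    _ = (11 / (4 * Real.sqrt Real.pi)) *
          (r⁻¹ * (Real.exp (-u^2/4) + Real.exp (-v^2/4))) := by
        field_simp
    _ ≤ 16 * (r⁻¹ * (Real.exp (-u^2/4) + Real.exp (-v^2/4))) := by
        apply mul_le_mul_of_nonneg_right ?_ (by positivity)
        rw [div_le_iff₀ (by positivity)]
        nlinarith
    _ = 16 * r⁻¹ * (Real.exp (-u^2/4) + Real.exp (-v^2/4)) := by ring
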